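/- For all integers k, ℓ ≥ 2, all natural numbers n ≥ 0, t ≥ 1, all j with 0 ≤ j < t, and all b with k^j ≤ b < k^{j+1}, the identity g_{k,ℓ}(k^t·n + b) = (1 − ℓ^j)·g_{k,ℓ}(k^t·n) + ℓ^j·g_{k,ℓ}(k^t·n + 1) holds (as an identity of integers). -/

import Mathlib

/-- For integers `k, ℓ ≥ 2`, `g k ℓ 0 = 1` and `g k ℓ n = 1 + ℓ ^ ⌊log_k n⌋` for `n > 0`. -/
def g (k ℓ : ℕ) (n : ℕ) : ℕ := if n = 0 then 1 else 1 + ℓ ^ Nat.log k n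

theorem stmt_0 (k ℓ : ℕ) (hk : 2 ≤ k) (hℓ : 2 ≤ ℓ) (n t j b : ℕ)
    (ht : 1 ≤ t) (hj : j < t) (hb₁ : k ^ j ≤ b) (hb₂ : b < k ^ (j + 1)) :
    (g k ℓ (k ^ t * n + b) : ℤ) =
      (1 - (ℓ : ℤ) ^ j) * g k ℓ (k ^ t * n) + (ℓ : ℤ) ^ j * g k ℓ (k ^ t * n + 1) := by
  have hk1 : 1 ≤ k := by omega
  have hb0 : 0 < b := lt_of_lt_of_le (Nat.pow_pos (by omega) : 0 < k ^ j) hb₁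
  have hbt : b < k ^ t := lt_of_lt_of_le hb₂ (Nat.pow_le_pow_right hk1 (by omega))
  rcases Nat.eq_zero_or_pos n with rfl | hn
  · have hlogb : Nat.log k b = j := Nat.log_eq_of_pow_le_of_lt_pow hb₁ hb₂
    simp only [g, Nat.mul_zero, Nat.zero_add, Nat.one_ne_zero, if_false,
      if_pos rfl, Nat.ne_of_gt hb0, if_neg (Nat.ne_of_gt hb0), hlogb, Nat.log_one_right]
    push_cast
    ring
  · set M := t + Nat.log k n with hM
    have hmain : ∀ c : ℕ, 0 < c → c < k ^ t → Nat.log k (k ^ t * n + c) = M := by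
      intro c hc hct
      apply Nat.log_eq_of_pow_le_of_lt_pow
      · calc k ^ M = k ^ t * k ^ Nat.log k n := pow_add k t _
        _ ≤ k ^ t * n := Nat.mul_le_mul_left _ (Nat.pow_log_le_self k (by omega))
        _ ≤ k ^ t * n + c := Nat.le_add_right _ _
      · calc k ^ t * n + c < k ^ t * n + k ^ t := by omega
        _ = k ^ t * (n + 1) := by ring
        _ ≤ k ^ t * k ^ (Nat.log k n + 1) :=
            Nat.mul_le_mul_left _ (Nat.lt_pow_succ_log_self (by omega) n)
        _ = k ^ (M + 1) := by rw [hM]; ring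
    have h1 : Nat.log k (k ^ t * n + b) = M := hmain b hb0 hbt
    have h2 : Nat.log k (k ^ t * n + 1) = M := hmain 1 one_pos (by
      calc 1 ≤ k ^ j := Nat.one_le_pow _ _ (by omega)
      _ ≤ b := hb₁
      _ < k ^ t := hbt)
    have h3 : Nat.log k (k ^ t * n) = M := by
      apply Nat.log_eq_of_pow_le_of_lt_pow
      · calc k ^ M = k ^ t * k ^ Nat.log k n := pow_add k t _
        _ ≤ k ^ t * n := Nat.mul_le_mul_left _ (Nat.pow_log_le_self k (by omega))
      · calc k ^ t * n < k ^ t * k ^ (Nat.log k n + 1) :=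
            Nat.mul_lt_mul_of_le_of_lt (le_refl _) (Nat.lt_pow_succ_log_self (by omega) n)
              (Nat.pow_pos (by omega) : 0 < k ^ t)
        _ = k ^ (M + 1) := by rw [hM]; ring
    have hne1 : k ^ t * n + b ≠ 0 := by positivity
    have hne2 : k ^ t * n + 1 ≠ 0 := by positivity
    have hne3 : k ^ t * n ≠ 0 := by positivity
    simp only [g, if_neg hne1, if_neg hne2, if_neg hne3, h1, h2, h3]
    push_cast
    ring
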